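/- Let n ≥ 2 be even, x ∈ {0,1}^n, M_1, …, M_{n−1} pairwise disjoint perfect matchings on [n], and η a Hermitian n×n complex matrix with Tr(η) = 1. Then the error probability averaged uniformly over the n−1 matchings satisfies (1/(n−1)) Σ_{α=1}^{n−1} Tr(E^{inc,x}_{M_α} η) = (n/(2(n−1))) (1 − ⟨φ_x|η|φ_x⟩). -/
import Mathlib


open Matrix

/-- A perfect matching on `[n]` (modelled as `Fin n`), represented as a
fixed-point-free involution `f`: the pairs of the matching are `{i, f i}`. -/
def IsPerfectMatching (n : ℕ) (f : Fin n → Fin n) : Prop :=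
  Function.Involutive f ∧ ∀ i, f i ≠ i

/-- The hidden matching state `|φ_x⟩ = (1/√n) Σ_i (−1)^{x_i} |i⟩` in `ℂ^n`. -/
noncomputable def phi (n : ℕ) (x : Fin n → Bool) : Fin n → ℂ :=
  fun i => (if x i then -1 else 1) / (Real.sqrt n : ℂ)

/-- `(−1)^{x_i ⊕ x_j}` as a complex number. -/
def eps (n : ℕ) (x : Fin n → Bool) (i j : Fin n) : ℂ :=
  if x i = x j then 1 else -1

/-- The incorrect-outcome vector `|ψ^x_{ij}⟩ = (1/√2)(|i⟩ − (−1)^{x_i⊕x_j}|j⟩)`. -/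
noncomputable def psi (n : ℕ) (x : Fin n → Bool) (i j : Fin n) : Fin n → ℂ :=
  fun k => ((if k = i then 1 else 0) - eps n x i j * (if k = j then 1 else 0)) /
    (Real.sqrt 2 : ℂ)

/-- The outer product `|u⟩⟨u|` as an `n × n` matrix. -/
noncomputable def outer {n : ℕ} (u : Fin n → ℂ) : Matrix (Fin n) (Fin n) ℂ :=
  Matrix.vecMulVec u (star u)

/-- The incorrect-outcome projector `E^{inc,x}_M`, summed over the pairs of the
matching `f`, each represented once by its smaller endpoint. -/
noncomputable def Einc (n : ℕ) (x : Fin n → Bool) (f : Fin n → Fin n) :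
    Matrix (Fin n) (Fin n) ℂ :=
  ∑ i ∈ Finset.univ.filter (fun i => i < f i), outer (psi n x i (f i))


section aux
open Finset
variable {n : ℕ}

lemma eps_symm (x : Fin n → Bool) (i j : Fin n) : eps n x i j = eps n x j i := by
  simp [eps, eq_comm]

lemma eps_self (x : Fin n → Bool) (i : Fin n) : eps n x i i = 1 := by simp [eps]

lemma eps_sq (x : Fin n → Bool) (i j : Fin n) : eps n x i j * eps n x i j = 1 := by
  unfold eps; split <;> norm_num

lemma eps_eq (x : Fin n → Bool) (i j : Fin n) :
    ((if x i then -1 else 1 : ℂ)) * ((if x j then -1 else 1 : ℂ)) = eps n x i j := by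
  cases hxi : x i <;> cases hxj : x j <;> simp [eps, hxi, hxj]

lemma star_psi (x : Fin n → Bool) (i j : Fin n) : star (psi n x i j) = psi n x i j := by
  funext l
  simp only [Pi.star_apply, psi, eps, RCLike.star_def, map_div₀, map_sub, _root_.map_mul,
    apply_ite (starRingEnd ℂ), _root_.map_one, map_zero, map_neg, Complex.conj_ofReal]

lemma star_phi (x : Fin n → Bool) : star (phi n x) = phi n x := by
  funext l
  simp only [Pi.star_apply, phi, RCLike.star_def, map_div₀,
    apply_ite (starRingEnd ℂ), _root_.map_one, map_neg, Complex.conj_ofReal]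

lemma trace_outer_mul (u : Fin n → ℂ) (η : Matrix (Fin n) (Fin n) ℂ) :
    (outer u * η).trace = star u ⬝ᵥ η.mulVec u := by
  simp only [trace, diag_apply, mul_apply, outer, vecMulVec_apply, dotProduct,
    mulVec, Pi.star_apply]
  rw [Finset.sum_comm]
  refine Finset.sum_congr rfl fun l _ => ?_
  simp only [dotProduct, Finset.mul_sum]
  refine Finset.sum_congr rfl fun k _ => ?_
  ring

lemma quad_psi (x : Fin n → Bool) (η : Matrix (Fin n) (Fin n) ℂ) (i j : Fin n) :
    psi n x i j ⬝ᵥ η.mulVec (psi n x i j)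
      = (η i i + η j j - eps n x i j * (η i j + η j i)) / 2 := by
  have h2 : ((Real.sqrt 2 : ℝ) : ℂ) * ((Real.sqrt 2 : ℝ) : ℂ) = 2 := by
    rw [← Complex.ofReal_mul, Real.mul_self_sqrt (by norm_num)]; norm_num
  have hmv : ∀ l, η.mulVec (psi n x i j) l
      = (η l i - eps n x i j * η l j) / (Real.sqrt 2 : ℂ) := by
    intro l
    simp only [mulVec, dotProduct, psi, mul_div_assoc', mul_sub, mul_ite, mul_one, mul_zero,
      ← Finset.sum_div, Finset.sum_sub_distrib, Finset.sum_ite_eq', Finset.mem_univ, if_true,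
      Finset.mul_sum, ← Finset.sum_mul]
    ring_nf
  simp only [dotProduct, hmv, psi]
  simp only [div_mul_div_comm, ← Finset.sum_div, sub_mul, ite_mul, one_mul, zero_mul,
    Finset.sum_sub_distrib, Finset.sum_ite_eq', Finset.mem_univ, if_true, mul_sub,
    Finset.mul_sum, mul_ite, mul_zero]
  rw [h2]
  linear_combination (η j j / 2) * eps_sq x i j

lemma sum_flip (f : Fin n → Fin n) (hf : Function.Involutive f) (g : Fin n → ℂ) :
    ∑ i ∈ univ.filter (fun i => f i < i), g i
      = ∑ i ∈ univ.filter (fun i => i < f i), g (f i) := by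
  refine Finset.sum_nbij' (fun i => f i) (fun i => f i) ?_ ?_ ?_ ?_ ?_
  · intro a ha; simp only [mem_filter, mem_univ, true_and] at *; rwa [hf a]
  · intro a ha; simp only [mem_filter, mem_univ, true_and] at *; rwa [hf a]
  · intro a _; exact hf a
  · intro a _; exact hf a
  · intro a _; rw [hf a]

lemma sum_split (f : Fin n → Fin n) (hf : Function.Involutive f)
    (hfix : ∀ i, f i ≠ i) (g : Fin n → ℂ) :
    ∑ i ∈ univ.filter (fun i => i < f i), (g i + g (f i)) = ∑ i, g i := by
  rw [Finset.sum_add_distrib, ← sum_flip f hf g]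
  rw [← Finset.sum_filter_add_sum_filter_not univ (fun i => i < f i) g]
  congr 1
  apply Finset.sum_congr _ (fun _ _ => rfl)
  ext i
  simp only [mem_filter, mem_univ, true_and, not_lt]
  exact ⟨fun h => h.le, fun h => lt_of_le_of_ne h (hfix i)⟩

lemma trace_Einc (x : Fin n → Bool) (f : Fin n → Fin n)
    (hf1 : Function.Involutive f) (hf2 : ∀ i, f i ≠ i)
    (η : Matrix (Fin n) (Fin n) ℂ) :
    (Einc n x f * η).trace
      = (η.trace - ∑ i, eps n x i (f i) * η i (f i)) / 2 := by
  rw [Einc, Finset.sum_mul, trace_sum]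
  have hterm : ∀ i ∈ univ.filter (fun i => i < f i),
      (outer (psi n x i (f i)) * η).trace
        = ((η i i + η (f i) (f i)) - eps n x i (f i) * (η i (f i) + η (f i) i)) / 2 := by
    intro i _
    rw [trace_outer_mul, star_psi, quad_psi]
  rw [Finset.sum_congr rfl hterm, ← Finset.sum_div, Finset.sum_sub_distrib]
  congr 2
  · rw [sum_split f hf1 hf2 (fun i => η i i)]
    simp only [trace, diag_apply]
  · rw [← sum_split f hf1 hf2 (fun i => eps n x i (f i) * η i (f i))]
    refine Finset.sum_congr rfl fun i _ => ?_
    simp only [hf1 i]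
    rw [eps_symm x (f i) i]
    ring

lemma sum_over_matchings {m : ℕ} (M : Fin m → Fin n → Fin n) (hm : m + 1 = n)
    (hne : ∀ α, ∀ i, M α i ≠ i)
    (hdisj : ∀ α β, α ≠ β → ∀ i, M α i ≠ M β i)
    (i : Fin n) (g : Fin n → ℂ) :
    ∑ α : Fin m, g (M α i) = ∑ j ∈ univ.erase i, g j := by
  have hinj : Function.Injective (fun α => M α i) := by
    intro a b hab
    by_contra hne'
    exact hdisj a b hne' i hab
  have himg : (univ.image (fun α => M α i)) = univ.erase i := by
    apply Finset.eq_of_subset_of_card_le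
    · intro j hj
      simp only [mem_image, mem_univ, true_and] at hj
      obtain ⟨α, rfl⟩ := hj
      exact Finset.mem_erase.2 ⟨hne α i, mem_univ _⟩
    · rw [Finset.card_erase_of_mem (mem_univ i), Finset.card_image_of_injective _ hinj]
      simp [hm]
  rw [← himg, Finset.sum_image (fun a _ b _ h => hinj h)]

lemma phi_quad (hn : 0 < n) (x : Fin n → Bool) (η : Matrix (Fin n) (Fin n) ℂ) :
    star (phi n x) ⬝ᵥ η.mulVec (phi n x)
      = (∑ i, ∑ j, eps n x i j * η i j) / n := by
  have hn2 : ((Real.sqrt n : ℝ) : ℂ) * ((Real.sqrt n : ℝ) : ℂ) = (n : ℂ) := by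
    rw [← Complex.ofReal_mul, Real.mul_self_sqrt (Nat.cast_nonneg n)]
    norm_num
  rw [star_phi]
  simp only [dotProduct, mulVec, phi, Finset.sum_div]
  refine Finset.sum_congr rfl fun i _ => ?_
  rw [Finset.mul_sum]
  apply Finset.sum_congr rfl
  intro j _
  rw [← eps_eq x i j]
  rw [show ((if x i then -1 else 1 : ℂ)) / (Real.sqrt n : ℂ) *
      (η i j * ((if x j then -1 else 1 : ℂ) / (Real.sqrt n : ℂ)))
      = ((if x i then -1 else 1 : ℂ)) * ((if x j then -1 else 1 : ℂ)) * η i j /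
        ((Real.sqrt n : ℂ) * (Real.sqrt n : ℂ)) by ring, hn2]

end aux
/-- For even `n ≥ 2`, `x ∈ {0,1}^n`, pairwise disjoint perfect matchings
`M_1, …, M_{n-1}` on `[n]`, and a Hermitian matrix `η` with `Tr(η) = 1`, the error
probability averaged uniformly over the `n − 1` matchings satisfies
`(1/(n−1)) Σ_α Tr(E^{inc,x}_{M_α} η) = (n/(2(n−1))) (1 − ⟨φ_x|η|φ_x⟩)`. -/
theorem averaged_error_probability (n : ℕ) (hn : 2 ≤ n) (hev : Even n)
    (x : Fin n → Bool) (M : Fin (n - 1) → (Fin n → Fin n))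
    (hpm : ∀ α, IsPerfectMatching n (M α))
    (hdisj : ∀ α β, α ≠ β → ∀ i, M α i ≠ M β i)
    (η : Matrix (Fin n) (Fin n) ℂ) (hη : η.IsHermitian) (htr : η.trace = 1) :
    ((n : ℂ) - 1)⁻¹ * ∑ α : Fin (n - 1), (Einc n x (M α) * η).trace =
      ((n : ℂ) / (2 * ((n : ℂ) - 1))) *
        (1 - star (phi n x) ⬝ᵥ η.mulVec (phi n x)) := by
  have hm : (n - 1) + 1 = n := by omega
  have hn0 : (n : ℂ) ≠ 0 := Nat.cast_ne_zero.2 (by omega)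
  have hn1 : (n : ℂ) - 1 ≠ 0 := by
    rw [sub_ne_zero]
    exact_mod_cast (by omega : n ≠ 1)
  set S : ℂ := ∑ i, ∑ j ∈ Finset.univ.erase i, eps n x i j * η i j with hS
  have hcard : ((Fintype.card (Fin (n - 1)) : ℕ) : ℂ) = (n : ℂ) - 1 := by
    rw [Fintype.card_fin]
    push_cast [Nat.cast_sub (by omega : 1 ≤ n)]
    ring
  have hsum : ∑ α : Fin (n - 1), (Einc n x (M α) * η).trace
      = (((n : ℂ) - 1) - S) / 2 := by
    have h1 : ∀ α, (Einc n x (M α) * η).trace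
        = (1 - ∑ i, eps n x i (M α i) * η i (M α i)) / 2 := by
      intro α
      rw [trace_Einc x (M α) (hpm α).1 (hpm α).2 η, htr]
    simp only [h1]
    rw [← Finset.sum_div]
    congr 1
    rw [Finset.sum_sub_distrib, Finset.sum_const, Finset.card_univ, nsmul_eq_mul, mul_one,
      hcard]
    congr 1
    rw [Finset.sum_comm]
    refine Finset.sum_congr rfl fun i _ => ?_
    exact sum_over_matchings M hm (fun α => (hpm α).2) hdisj i
      (fun j => eps n x i j * η i j)
  have hphi : star (phi n x) ⬝ᵥ η.mulVec (phi n x) = (1 + S) / n := by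
    rw [phi_quad (by omega) x η]
    congr 1
    have : ∀ i, ∑ j, eps n x i j * η i j
        = η i i + ∑ j ∈ Finset.univ.erase i, eps n x i j * η i j := by
      intro i
      rw [← Finset.add_sum_erase Finset.univ _ (Finset.mem_univ i), eps_self, one_mul]
    simp only [this]
    rw [Finset.sum_add_distrib, hS]
    have : ∑ i, η i i = η.trace := by simp only [trace, diag_apply]
    rw [this, htr]
  rw [hsum, hphi]
  field_simp
  ring
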